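/- Let H = (F,G) be a formal transformation with invertible Jacobian mapping an m-infinite type hypersurface in normal form into another such. Then the derivatives \partial^\ell G/\partial w^\ell(0,0) are real for all \ell \le m. -/

import Mathlib

/-!
STATEMENT 0. A formal invertible transformation `H = (F, G)` of `(ℂ², 0)` mapping a
hypersurface `M : w = τ + i τ^m (ε z χ + ∑_{k,l≥2} Θ_{kl}(τ) z^k χ^l)` (complexified
defining equation, normal coordinates, `χ = z̄`, `τ = w̄`) into another such hypersurface
`M*` satisfies `G(z, 0) = 0`, i.e. `G = O(w)`.
-/

noncomputable section

open scoped Classical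

/-- Coefficientwise substitution of a tuple of multivariate power series into a power
series in `Fin k` variables.  (When each `a i` has vanishing constant term, only finitely
many terms contribute to each coefficient, and this is the usual composition.) -/
def msubst {σ : Type} {k : ℕ} (a : Fin k → MvPowerSeries σ ℂ)
    (f : MvPowerSeries (Fin k) ℂ) : MvPowerSeries σ ℂ :=
  fun d => ∑' e : Fin k →₀ ℕ,
    (MvPowerSeries.coeff e f) * MvPowerSeries.coeff d (∏ i, a i ^ e i)

/-- The exponent `(k, l, j)` for the monomial `z^k χ^l τ^j` in three variables. -/
def idx (k l j : ℕ) : Fin 3 →₀ ℕ :=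
  Finsupp.single 0 k + Finsupp.single 1 l + Finsupp.single 2 j

/-- `ρ` is the complex defining series, in admissible normal coordinates, of an
`m`-infinite type hypersurface: `w = ρ(z, χ, τ) = τ + i τ^m (ε z χ + ∑_{k,l≥2} Θ_{kl}(τ) z^k χ^l)`. -/
def IsDefiningSeries (m : ℕ) (ε : ℤ) (Θ : ℕ → ℕ → PowerSeries ℂ)
    (ρ : MvPowerSeries (Fin 3) ℂ) : Prop :=
  ∀ k l j : ℕ, MvPowerSeries.coeff (idx k l j) ρ =
    if k = 0 ∧ l = 0 then (if j = 1 then 1 else 0)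
    else if k = 1 ∧ l = 1 then (if j = m then Complex.I * (ε : ℂ) else 0)
    else if 2 ≤ k ∧ 2 ≤ l then
      (if m ≤ j then Complex.I * PowerSeries.coeff (j - m) (Θ k l) else 0)
    else 0

/-- The conjugate formal power series (coefficients conjugated). -/
def conj2 (F : MvPowerSeries (Fin 2) ℂ) : MvPowerSeries (Fin 2) ℂ :=
  MvPowerSeries.map (starRingEnd ℂ) F

/-- The complexified mapping condition `H(M) ⊂ M*` for a formal map `H = (F, G)`:
`G(z, ρ(z,χ,τ)) = ρ*(F(z, ρ(z,χ,τ)), F̄(χ,τ), Ḡ(χ,τ))` as formal power series in `(z,χ,τ)`. -/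
def MapsInto (F G : MvPowerSeries (Fin 2) ℂ) (ρ ρs : MvPowerSeries (Fin 3) ℂ) : Prop :=
  msubst ![MvPowerSeries.X 0, ρ] G =
    msubst ![msubst ![MvPowerSeries.X 0, ρ] F,
             msubst ![MvPowerSeries.X 1, MvPowerSeries.X 2] (conj2 F),
             msubst ![MvPowerSeries.X 1, MvPowerSeries.X 2] (conj2 G)] ρs

lemma single_decomp {σ : Type} (s : σ) (n : ℕ) (a b : σ →₀ ℕ)
    (h : a + b = Finsupp.single s n) :
    a = Finsupp.single s (a s) ∧ b = Finsupp.single s (b s) ∧ a s + b s = n := by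
  have hs : ∀ t, a t + b t = Finsupp.single s n t := fun t => by
    rw [← Finsupp.add_apply, h]
  refine ⟨?_, ?_, ?_⟩
  · ext t
    by_cases ht : t = s
    · subst ht; simp
    · have := hs t
      rw [Finsupp.single_apply, if_neg (fun hh => ht hh.symm)] at this
      have : a t = 0 := by omega
      rw [this, Finsupp.single_apply, if_neg (fun hh => ht hh.symm)]
  · ext t
    by_cases ht : t = s
    · subst ht; simp
    · have := hs t
      rw [Finsupp.single_apply, if_neg (fun hh => ht hh.symm)] at this
      have : b t = 0 := by omega
      rw [this, Finsupp.single_apply, if_neg (fun hh => ht hh.symm)]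
  · have := hs s
    simpa using this

/-- Restriction of a multivariate power series to the single variable `s`
(all other variables set to `0`), as a ring homomorphism. -/
def restr {σ : Type} (s : σ) : MvPowerSeries σ ℂ →+* PowerSeries ℂ where
  toFun f := PowerSeries.mk fun n => MvPowerSeries.coeff (Finsupp.single s n) f
  map_zero' := by ext n; simp
  map_add' f g := by ext n; simp
  map_one' := by
    ext n
    simp only [PowerSeries.coeff_mk, MvPowerSeries.coeff_one, PowerSeries.coeff_one,
      Finsupp.single_eq_zero]
  map_mul' f g := by
    ext n
    rw [PowerSeries.coeff_mk, PowerSeries.coeff_mul, MvPowerSeries.coeff_mul]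
    refine Finset.sum_nbij' (fun p => (p.1 s, p.2 s))
      (fun q => (Finsupp.single s q.1, Finsupp.single s q.2)) ?_ ?_ ?_ ?_ ?_
    · intro p hp
      rw [Finset.HasAntidiagonal.mem_antidiagonal] at hp ⊢
      exact (single_decomp s n p.1 p.2 hp).2.2
    · intro q hq
      rw [Finset.HasAntidiagonal.mem_antidiagonal] at hq ⊢
      rw [← Finsupp.single_add, hq]
    · intro p hp
      rw [Finset.HasAntidiagonal.mem_antidiagonal] at hp
      obtain ⟨h1, h2, -⟩ := single_decomp s n p.1 p.2 hp
      exact Prod.ext h1.symm h2.symm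
    · intro q hq; simp
    · intro p hp
      rw [Finset.HasAntidiagonal.mem_antidiagonal] at hp
      obtain ⟨h1, h2, -⟩ := single_decomp s n p.1 p.2 hp
      simp only [PowerSeries.coeff_mk]
      rw [← h1, ← h2]

lemma restr_coeff {σ : Type} (s : σ) (f : MvPowerSeries σ ℂ) (n : ℕ) :
    PowerSeries.coeff n (restr s f) = MvPowerSeries.coeff (Finsupp.single s n) f := by
  exact PowerSeries.coeff_mk n (fun n => MvPowerSeries.coeff (Finsupp.single s n) f)

lemma restr_X_self {σ : Type} (s : σ) : restr s (MvPowerSeries.X s) = PowerSeries.X := by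
  ext n
  rw [restr_coeff, MvPowerSeries.X, MvPowerSeries.coeff_monomial, PowerSeries.coeff_X]
  congr 1
  simp only [eq_iff_iff]
  constructor
  · intro h; have := congrArg (fun g => g s) h; simpa using this
  · rintro rfl; rfl

lemma restr_X_ne {σ : Type} (s t : σ) (h : t ≠ s) : restr s (MvPowerSeries.X t) = 0 := by
  ext n
  rw [restr_coeff, MvPowerSeries.X, MvPowerSeries.coeff_monomial, if_neg, map_zero]
  intro hh
  have : Finsupp.single s n t = Finsupp.single t 1 t := by rw [hh]
  rw [Finsupp.single_apply, if_neg (fun hh => h hh.symm), Finsupp.single_apply, if_pos rfl] at this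
  exact one_ne_zero this.symm
def msubst1 {k : ℕ} (a : Fin k → PowerSeries ℂ) (f : MvPowerSeries (Fin k) ℂ) :
    PowerSeries ℂ :=
  PowerSeries.mk fun n => ∑' e : Fin k →₀ ℕ,
    (MvPowerSeries.coeff e f) * PowerSeries.coeff n (∏ i, a i ^ e i)

lemma coeff_msubst {σ : Type} {k : ℕ} (a : Fin k → MvPowerSeries σ ℂ)
    (f : MvPowerSeries (Fin k) ℂ) (d : σ →₀ ℕ) :
    MvPowerSeries.coeff d (msubst a f) = ∑' e : Fin k →₀ ℕ,
      (MvPowerSeries.coeff e f) * MvPowerSeries.coeff d (∏ i, a i ^ e i) :=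
  rfl

lemma coeff_msubst1 {k : ℕ} (a : Fin k → PowerSeries ℂ) (f : MvPowerSeries (Fin k) ℂ)
    (n : ℕ) :
    PowerSeries.coeff n (msubst1 a f) = ∑' e : Fin k →₀ ℕ,
      (MvPowerSeries.coeff e f) * PowerSeries.coeff n (∏ i, a i ^ e i) :=
  PowerSeries.coeff_mk _ _

lemma restr_msubst {σ : Type} (s : σ) {k : ℕ} (a : Fin k → MvPowerSeries σ ℂ)
    (f : MvPowerSeries (Fin k) ℂ) :
    restr s (msubst a f) = msubst1 (fun i => restr s (a i)) f := by
  ext n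
  rw [restr_coeff, coeff_msubst, coeff_msubst1]
  refine tsum_congr fun e => ?_
  congr 1
  have : (∏ i, (fun i => restr s (a i)) i ^ e i) = restr s (∏ i, a i ^ e i) := by
    rw [map_prod]
    exact Finset.prod_congr rfl fun i _ => (map_pow _ _ _).symm
  rw [this, restr_coeff]

lemma fin2_eq_single (e : Fin 2 →₀ ℕ) (n : ℕ) (h0 : e 0 = 0) (h1 : e 1 = n) :
    e = Finsupp.single 1 n := by
  ext i
  fin_cases i
  · simpa using h0
  · simpa using h1

lemma msubst1_zero_X (f : MvPowerSeries (Fin 2) ℂ) (n : ℕ) :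
    PowerSeries.coeff n (msubst1 ![0, PowerSeries.X] f) =
      MvPowerSeries.coeff (Finsupp.single 1 n) f := by
  rw [coeff_msubst1, tsum_eq_single (Finsupp.single 1 n)]
  · simp [Fin.prod_univ_two, PowerSeries.coeff_X_pow]
  · intro e he
    rw [Fin.prod_univ_two]
    simp only [Matrix.cons_val_zero, Matrix.cons_val_one, Matrix.head_cons]
    rcases Nat.eq_zero_or_pos (e 0) with h0 | h0
    · have hn : e 1 ≠ n := fun h1 => he (fin2_eq_single e n h0 h1)
      rw [h0, pow_zero, one_mul, PowerSeries.coeff_X_pow, if_neg (fun h => hn h.symm), mul_zero]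
    · rw [zero_pow (by omega), zero_mul, map_zero, mul_zero]

lemma idx_self (e : Fin 3 →₀ ℕ) : idx (e 0) (e 1) (e 2) = e := by
  ext i
  fin_cases i <;> simp [idx, Finsupp.single_apply]

lemma idx_zero_zero (j : ℕ) : idx 0 0 j = Finsupp.single 2 j := by
  simp [idx]

lemma fin3_eq_single2 (e : Fin 3 →₀ ℕ) (h0 : e 0 = 0) (h1 : e 1 = 0) (h2 : e 2 = 1) :
    e = Finsupp.single 2 1 := by
  ext i
  fin_cases i <;> simp [h0, h1, h2, Finsupp.single_apply]

lemma X_dvd_of_coeff_zero {p : PowerSeries ℂ} (h : PowerSeries.coeff 0 p = 0) :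
    (PowerSeries.X : PowerSeries ℂ) ∣ p := by
  rw [PowerSeries.X_dvd_iff, ← PowerSeries.coeff_zero_eq_constantCoeff_apply]
  exact h

lemma coeff_msubst1_defining {m : ℕ} {ε : ℤ} {Θs : ℕ → ℕ → PowerSeries ℂ}
    {ρs : MvPowerSeries (Fin 3) ℂ} (hρs : IsDefiningSeries m ε Θs ρs)
    (a b c : PowerSeries ℂ)
    (ha : PowerSeries.coeff 0 a = 0) (hb : PowerSeries.coeff 0 b = 0)
    (hc : PowerSeries.coeff 0 c = 0) (l : ℕ) (hl : l ≤ m) :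
    PowerSeries.coeff l (msubst1 ![a, b, c] ρs) = PowerSeries.coeff l c := by
  rw [coeff_msubst1, tsum_eq_single (Finsupp.single 2 1)]
  · have h1 : MvPowerSeries.coeff (Finsupp.single 2 1) ρs = 1 := by
      rw [← idx_zero_zero, hρs 0 0 1]
      simp
    rw [h1, one_mul, Fin.prod_univ_three]
    simp
  · intro e he
    have hc' := hρs (e 0) (e 1) (e 2)
    rw [idx_self] at hc'
    have key : MvPowerSeries.coeff e ρs = 0 ∨ (1 ≤ e 0 ∧ 1 ≤ e 1 ∧ m ≤ e 2) := by
      by_cases h00 : e 0 = 0 ∧ e 1 = 0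
      · left
        rw [hc', if_pos h00, if_neg]
        intro h2
        exact he (fin3_eq_single2 e h00.1 h00.2 h2)
      · by_cases h11 : e 0 = 1 ∧ e 1 = 1
        · by_cases hem : e 2 = m
          · right; omega
          · left; rw [hc', if_neg h00, if_pos h11, if_neg hem]
        · by_cases h22 : 2 ≤ e 0 ∧ 2 ≤ e 1
          · by_cases hem : m ≤ e 2
            · right; omega
            · left; rw [hc', if_neg h00, if_neg h11, if_pos h22, if_neg hem]
          · left; rw [hc', if_neg h00, if_neg h11, if_neg h22]
    rcases key with h | ⟨h0, h1, h2⟩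
    · rw [h, zero_mul]
    · have hdvd : (PowerSeries.X : PowerSeries ℂ) ^ (e 0 + e 1 + e 2) ∣
          a ^ e 0 * b ^ e 1 * c ^ e 2 := by
        rw [pow_add, pow_add]
        exact mul_dvd_mul (mul_dvd_mul (pow_dvd_pow_of_dvd (X_dvd_of_coeff_zero ha) _)
          (pow_dvd_pow_of_dvd (X_dvd_of_coeff_zero hb) _))
          (pow_dvd_pow_of_dvd (X_dvd_of_coeff_zero hc) _)
      have hz : PowerSeries.coeff l (a ^ e 0 * b ^ e 1 * c ^ e 2) = 0 :=
        PowerSeries.X_pow_dvd_iff.mp hdvd l (by omega)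
      rw [Fin.prod_univ_three]
      simp only [Matrix.cons_val_zero, Matrix.cons_val_one, Matrix.head_cons,
        Matrix.cons_val_two, Matrix.tail_cons]
      rw [hz, mul_zero]

lemma restr2_rho {m : ℕ} {ε : ℤ} {Θ : ℕ → ℕ → PowerSeries ℂ}
    {ρ : MvPowerSeries (Fin 3) ℂ} (hρ : IsDefiningSeries m ε Θ ρ) :
    restr (2 : Fin 3) ρ = PowerSeries.X := by
  ext n
  rw [restr_coeff, ← idx_zero_zero, hρ 0 0 n, PowerSeries.coeff_X]
  simp

theorem formal_map_transverse_derivatives_real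
    (m : ℕ) (hm : 1 ≤ m) (ε : ℤ) (hε : ε = 1 ∨ ε = -1)
    (Θ Θs : ℕ → ℕ → PowerSeries ℂ)
    (F G : MvPowerSeries (Fin 2) ℂ) (ρ ρs : MvPowerSeries (Fin 3) ℂ)
    (hρ : IsDefiningSeries m ε Θ ρ) (hρs : IsDefiningSeries m ε Θs ρs)
    (hF0 : MvPowerSeries.coeff 0 F = 0) (hG0 : MvPowerSeries.coeff 0 G = 0)
    (hJac : (Matrix.det
      !![MvPowerSeries.coeff (Finsupp.single 0 1) F,
         MvPowerSeries.coeff (Finsupp.single 1 1) F;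
         MvPowerSeries.coeff (Finsupp.single 0 1) G,
         MvPowerSeries.coeff (Finsupp.single 1 1) G]) ≠ 0)
    (hmap : MapsInto F G ρ ρs) :
    -- `∂^ℓ G/∂w^ℓ (0,0) = ℓ! ⬝ (coefficient of w^ℓ in G)` is real for all `ℓ ≤ m`
    ∀ l : ℕ, l ≤ m →
      ((l.factorial : ℂ) * MvPowerSeries.coeff (Finsupp.single 1 l) G).im = 0 := by
  intro l hl
  have hv1 : (fun i => restr (2 : Fin 3) (![MvPowerSeries.X 0, ρ] i))
      = ![0, PowerSeries.X] := by
    funext i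
    fin_cases i
    · exact restr_X_ne 2 0 (by decide)
    · exact restr2_rho hρ
  have hv2 : (fun i => restr (2 : Fin 3) (![MvPowerSeries.X 1, MvPowerSeries.X 2] i))
      = ![0, PowerSeries.X] := by
    funext i
    fin_cases i
    · exact restr_X_ne 2 1 (by decide)
    · exact restr_X_self 2
  have h2 := congrArg (fun q => PowerSeries.coeff l (restr (2 : Fin 3) q)) hmap
  simp only [restr_msubst, hv1, hv2] at h2
  rw [msubst1_zero_X] at h2
  have hv3 : (fun i => restr (2 : Fin 3)
      (![msubst ![MvPowerSeries.X 0, ρ] F,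
         msubst ![MvPowerSeries.X 1, MvPowerSeries.X 2] (conj2 F),
         msubst ![MvPowerSeries.X 1, MvPowerSeries.X 2] (conj2 G)] i))
      = ![msubst1 ![0, PowerSeries.X] F, msubst1 ![0, PowerSeries.X] (conj2 F),
          msubst1 ![0, PowerSeries.X] (conj2 G)] := by
    funext i
    fin_cases i
    · show restr (2 : Fin 3) (msubst ![MvPowerSeries.X 0, ρ] F) = _
      rw [restr_msubst, hv1]
      simp
    · show restr (2 : Fin 3) (msubst ![MvPowerSeries.X 1, MvPowerSeries.X 2] (conj2 F)) = _
      rw [restr_msubst, hv2]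
      simp
    · show restr (2 : Fin 3) (msubst ![MvPowerSeries.X 1, MvPowerSeries.X 2] (conj2 G)) = _
      rw [restr_msubst, hv2]
      simp
  rw [hv3] at h2
  have hsingle0 : (Finsupp.single 1 0 : Fin 2 →₀ ℕ) = 0 := Finsupp.single_zero 1
  have hF0' : PowerSeries.coeff 0 (msubst1 ![0, PowerSeries.X] F) = 0 := by
    rw [msubst1_zero_X, hsingle0]; exact hF0
  have hFc0 : PowerSeries.coeff 0 (msubst1 ![0, PowerSeries.X] (conj2 F)) = 0 := by
    rw [msubst1_zero_X, hsingle0]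
    show MvPowerSeries.coeff 0 (MvPowerSeries.map (starRingEnd ℂ) F) = 0
    rw [MvPowerSeries.coeff_map, hF0, map_zero]
  have hGc0 : PowerSeries.coeff 0 (msubst1 ![0, PowerSeries.X] (conj2 G)) = 0 := by
    rw [msubst1_zero_X, hsingle0]
    show MvPowerSeries.coeff 0 (MvPowerSeries.map (starRingEnd ℂ) G) = 0
    rw [MvPowerSeries.coeff_map, hG0, map_zero]
  rw [coeff_msubst1_defining hρs _ _ _ hF0' hFc0 hGc0 l hl, msubst1_zero_X] at h2
  have hconj : MvPowerSeries.coeff (Finsupp.single 1 l) (conj2 G)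
      = (starRingEnd ℂ) (MvPowerSeries.coeff (Finsupp.single 1 l) G) :=
    MvPowerSeries.coeff_map _ _ _
  rw [hconj] at h2
  have him : (MvPowerSeries.coeff (Finsupp.single 1 l) G).im = 0 :=
    Complex.conj_eq_iff_im.mp h2.symm
  simp [Complex.mul_im, him]


end
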